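/- For every anisotropy parameter ν ∈ (-1,1) and all complex numbers p⁺ₓ, p⁺ᵧ, p⁻ₓ, p⁻ᵧ, the p-wave kinetic energy density e = |p⁺ₓ|² + |p⁺ᵧ|² + |p⁻ₓ|² + |p⁻ᵧ|² + (1+ν)[p⁺ₓ·p⁻ₓ − p⁺ᵧ·p⁻ᵧ] + (1−ν)[p⁻ₓ∧p⁺ᵧ − p⁺ₓ∧p⁻ᵧ] satisfies the sum-of-squares identity e = (1+ν)/2·|p⁺ₓ + p⁻ₓ|² + (1+ν)/2·|p⁺ᵧ − p⁻ᵧ|² + (1−ν)/2·|p⁺ᵧ + i p⁻ₓ|² + (1−ν)/2·|p⁺ₓ + i p⁻ᵧ|²; in particular e ≥ 0. -/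

import Mathlib

/-- Real dot product of complex numbers viewed as vectors in ℝ². -/
noncomputable def cdot (a b : ℂ) : ℝ := a.re * b.re + a.im * b.im

/-- Wedge product of complex numbers viewed as vectors in ℝ². -/
noncomputable def cwedge (a b : ℂ) : ℝ := a.re * b.im - a.im * b.re

/-- The p-wave kinetic energy density built from the values of the
partial derivatives `∂ₓη₊, ∂ᵧη₊, ∂ₓη₋, ∂ᵧη₋`. -/
noncomputable def ekinDensity (ν : ℝ) (ppx ppy pmx pmy : ℂ) : ℝ :=
  ‖ppx‖ ^ 2 + ‖ppy‖ ^ 2 + ‖pmx‖ ^ 2 + ‖pmy‖ ^ 2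
    + (1 + ν) * (cdot ppx pmx - cdot ppy pmy)
    + (1 - ν) * (cwedge pmx ppy - cwedge ppx pmy)

theorem stmt0 (ν : ℝ) (hν : ν ∈ Set.Ioo (-1 : ℝ) 1) (ppx ppy pmx pmy : ℂ) :
    ekinDensity ν ppx ppy pmx pmy
      = (1 + ν) / 2 * ‖ppx + pmx‖ ^ 2
        + (1 + ν) / 2 * ‖ppy - pmy‖ ^ 2
        + (1 - ν) / 2 * ‖ppy + Complex.I * pmx‖ ^ 2
        + (1 - ν) / 2 * ‖ppx + Complex.I * pmy‖ ^ 2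
    ∧ 0 ≤ ekinDensity ν ppx ppy pmx pmy := by
  obtain ⟨h1, h2⟩ := hν
  have habs : ∀ z : ℂ, ‖z‖ ^ 2 = z.re ^ 2 + z.im ^ 2 := by
    intro z
    rw [Complex.sq_norm, Complex.normSq_apply]; ring
  have key : ekinDensity ν ppx ppy pmx pmy
      = (1 + ν) / 2 * ‖ppx + pmx‖ ^ 2
        + (1 + ν) / 2 * ‖ppy - pmy‖ ^ 2
        + (1 - ν) / 2 * ‖ppy + Complex.I * pmx‖ ^ 2
        + (1 - ν) / 2 * ‖ppx + Complex.I * pmy‖ ^ 2 := by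
    simp only [ekinDensity, cdot, cwedge, habs, Complex.add_re, Complex.add_im,
      Complex.sub_re, Complex.sub_im, Complex.mul_re, Complex.mul_im,
      Complex.I_re, Complex.I_im]
    ring
  refine ⟨key, ?_⟩
  rw [key]
  have := sq_nonneg (‖ppx + pmx‖)
  have := sq_nonneg (‖ppy - pmy‖)
  have := sq_nonneg (‖ppy + Complex.I * pmx‖)
  have := sq_nonneg (‖ppx + Complex.I * pmy‖)
  nlinarith
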